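/- arXiv:2407.03840 — 3 statements merged into one kernel-verified Lean document; each statement's English description precedes it below -/
import Mathlib

section
/- Let H be a real Hilbert space, Γ ⊆ H a subset, and (Λ_n)_{n∈ℕ} a nested sequence (Λ_n ⊆ Λ_{n+1}) of finite linearly independent subsets of Γ. Then ‖f − I_{Λ_n}(f)‖ → 0 as n → ∞ for every f in the closed linear span H_Γ of Γ if and only if P_{Λ_n}(g) → 0 as n → ∞ for every g ∈ Γ. -/
open Filter
open scoped RealInnerProductSpace ENNReal Topology

/-- Generalized interpolation operator: orthogonal projection onto the span of `Λ`. -/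
noncomputable def interp {H : Type*} [NormedAddCommGroup H] [InnerProductSpace ℝ H]
    (Λ : Finset H) (f : H) : H :=
  haveI : FiniteDimensional ℝ (Submodule.span ℝ (Λ : Set H)) :=
    FiniteDimensional.span_of_finite ℝ Λ.finite_toSet
  ((Submodule.span ℝ (Λ : Set H)).orthogonalProjectionOnto f : H)

/-- Generalized power function: distance from `g` to the span of `Λ`. -/
noncomputable def powerFn {H : Type*} [NormedAddCommGroup H] [InnerProductSpace ℝ H]
    (Λ : Finset H) (g : H) : ℝ := ‖g - interp Λ g‖

lemma interp_mem {H : Type*} [NormedAddCommGroup H] [InnerProductSpace ℝ H]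
    (Λ : Finset H) (f : H) : interp Λ f ∈ Submodule.span ℝ (Λ : Set H) := by
  unfold interp; exact SetLike.coe_mem _

lemma interp_min {H : Type*} [NormedAddCommGroup H] [InnerProductSpace ℝ H]
    (Λ : Finset H) (f w : H) (hw : w ∈ Submodule.span ℝ (Λ : Set H)) :
    ‖f - interp Λ f‖ ≤ ‖f - w‖ := by
  haveI : FiniteDimensional ℝ (Submodule.span ℝ (Λ : Set H)) :=
    FiniteDimensional.span_of_finite ℝ Λ.finite_toSet
  have := Submodule.starProjection_minimal (U := Submodule.span ℝ (Λ : Set H)) f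
  unfold interp
  rw [Submodule.coe_orthogonalProjectionOnto_apply, this]
  exact ciInf_le ⟨0, fun x ⟨v, hv⟩ => hv ▸ norm_nonneg _⟩ (⟨w, hw⟩ : Submodule.span ℝ (Λ : Set H))

/-- convergence of generalized interpolation on the closed linear span of `Γ`
holds if and only if the power functions decay pointwise on `Γ`. -/
theorem stmt_0 {H : Type*} [NormedAddCommGroup H] [InnerProductSpace ℝ H] [CompleteSpace H]
    (Γ : Set H) (Λ : ℕ → Finset H)
    (hnested : ∀ n, Λ n ⊆ Λ (n + 1))
    (hsub : ∀ n, (Λ n : Set H) ⊆ Γ)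
    (hli : ∀ n, LinearIndependent (ι := (Λ n : Set H)) ℝ Subtype.val) :
    (∀ f ∈ closure (Submodule.span ℝ Γ : Set H),
        Tendsto (fun n => ‖f - interp (Λ n) f‖) atTop (𝓝 0)) ↔
      (∀ g ∈ Γ, Tendsto (fun n => powerFn (Λ n) g) atTop (𝓝 0)) := by
  constructor
  · intro h g hg
    exact h g (subset_closure (Submodule.subset_span hg))
  · intro h f hf
    rw [Metric.tendsto_atTop]
    intro ε hε
    -- find a finite linear combination close to f
    obtain ⟨y, hy, hfy⟩ := Metric.mem_closure_iff.1 hf (ε / 2) (by linarith)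
    obtain ⟨c, hcsupp, hcsum⟩ := Submodule.mem_span_set.1 hy
    -- the weighted sum of power functions tends to 0
    have hsum : Tendsto (fun n => ∑ g ∈ c.support, |c g| * powerFn (Λ n) g) atTop (𝓝 0) := by
      have : Tendsto (fun n => ∑ g ∈ c.support, |c g| * powerFn (Λ n) g) atTop
          (𝓝 (∑ g ∈ c.support, |c g| * 0)) := by
        refine tendsto_finset_sum _ fun g hg => ?_
        exact (h g (hcsupp hg)).const_mul _
      simpa using this
    rw [Metric.tendsto_atTop] at hsum
    obtain ⟨N, hN⟩ := hsum (ε / 2) (by linarith)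
    refine ⟨N, fun n hn => ?_⟩
    have hsum' := hN n hn
    rw [Real.dist_eq, sub_zero] at hsum'
    have hsum'' : ∑ g ∈ c.support, |c g| * powerFn (Λ n) g < ε / 2 :=
      lt_of_abs_lt hsum'
    -- the candidate approximant in span (Λ n)
    set z : H := ∑ g ∈ c.support, c g • interp (Λ n) g with hz
    have hzmem : z ∈ Submodule.span ℝ ((Λ n : Set H)) :=
      Submodule.sum_mem _ fun g _ => Submodule.smul_mem _ _ (interp_mem _ _)
    have h1 : ‖f - interp (Λ n) f‖ ≤ ‖f - z‖ := interp_min _ _ _ hzmem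
    have h2 : ‖y - z‖ ≤ ∑ g ∈ c.support, |c g| * powerFn (Λ n) g := by
      have hyz : y - z = ∑ g ∈ c.support, c g • (g - interp (Λ n) g) := by
        rw [hz, ← hcsum, Finsupp.sum, ← Finset.sum_sub_distrib]
        exact Finset.sum_congr rfl fun g _ => (smul_sub _ _ _).symm
      rw [hyz]
      refine (norm_sum_le _ _).trans (le_of_eq ?_)
      refine Finset.sum_congr rfl fun g _ => ?_
      rw [norm_smul, Real.norm_eq_abs]; rfl
    have h3 : ‖f - z‖ ≤ ‖f - y‖ + ‖y - z‖ := by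
      have : f - z = (f - y) + (y - z) := by abel
      rw [this]; exact norm_add_le _ _
    have hfy' : ‖f - y‖ < ε / 2 := by rwa [← dist_eq_norm]
    rw [Real.dist_eq, sub_zero, abs_of_nonneg (norm_nonneg _)]
    calc ‖f - interp (Λ n) f‖ ≤ ‖f - y‖ + ‖y - z‖ := h1.trans h3
      _ < ε / 2 + ε / 2 := by
          apply add_lt_add_of_lt_of_le hfy' (h2.trans hsum''.le)
      _ = ε := by ring
end

section
/- Let H be a real Hilbert space, Γ ⊆ H, and (Λ_n)_{n∈ℕ} a nested sequence of finite linearly independent subsets of Γ such that the fill distances satisfy h_{Λ_n,Γ} → 0 as n → ∞. Then ‖f − I_{Λ_n}(f)‖ → 0 as n → ∞ for every f in the closed linear span H_Γ of Γ. -/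
open Filter
open scoped RealInnerProductSpace ENNReal Topology

/-- Fill distance of `Λ` in `Γ`: the supremum over `g ∈ Γ` of the distance from `g` to `Λ`. -/
noncomputable def fillDist {M : Type*} [PseudoEMetricSpace M] (Λ Γ : Set M) : ℝ≥0∞ :=
  ⨆ g ∈ Γ, EMetric.infEdist g Λ

/-- if the fill distances `h_{Λ n, Γ}` tend to `0`, then the generalized
interpolants converge to `f` for every `f` in the closed linear span of `Γ`. -/
theorem stmt_2 {H : Type*} [NormedAddCommGroup H] [InnerProductSpace ℝ H] [CompleteSpace H]
    (Γ : Set H) (Λ : ℕ → Finset H)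
    (hnested : ∀ n, Λ n ⊆ Λ (n + 1))
    (hsub : ∀ n, (Λ n : Set H) ⊆ Γ)
    (hli : ∀ n, LinearIndependent (ι := (Λ n : Set H)) ℝ Subtype.val)
    (hfill : Tendsto (fun n => fillDist (Λ n : Set H) Γ) atTop (𝓝 0)) :
    ∀ f ∈ closure (Submodule.span ℝ Γ : Set H),
      Tendsto (fun n => ‖f - interp (Λ n) f‖) atTop (𝓝 0) := by
  intro f hf
  have hmonoset : Monotone fun n => (Λ n : Set H) :=
    monotone_nat_of_le_succ fun n => by exact_mod_cast hnested n
  have hmono : Monotone fun n => Submodule.span ℝ ((Λ n : Set H)) :=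
    fun a b hab => Submodule.span_mono (hmonoset hab)
  set S : Submodule ℝ H := ⨆ n, Submodule.span ℝ ((Λ n : Set H)) with hS
  -- Γ ⊆ closure S
  have hΓ : Γ ⊆ closure (S : Set H) := by
    intro g hg
    rw [EMetric.mem_closure_iff_infEdist_zero]
    have hle : ∀ n, EMetric.infEdist g (S : Set H) ≤ fillDist (Λ n : Set H) Γ := by
      intro n
      refine le_trans (EMetric.infEdist_anti ?_) (le_iSup₂ (f := fun g _ => EMetric.infEdist g (Λ n : Set H)) g hg)
      intro x hx
      exact SetLike.mem_coe.mpr (Submodule.mem_iSup_of_mem n (Submodule.subset_span hx))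
    have := ge_of_tendsto' hfill hle
    exact le_antisymm this zero_le'
  -- f ∈ closure S
  have hfS : f ∈ closure (S : Set H) := by
    have h1 : (Submodule.span ℝ Γ : Set H) ⊆ closure (S : Set H) := by
      have : Submodule.span ℝ Γ ≤ S.topologicalClosure :=
        Submodule.span_le.mpr fun g hg => hΓ hg
      exact this
    have := closure_mono h1 hf
    rwa [closure_closure] at this
  -- key inequality
  have key : ∀ n, ∀ v ∈ Submodule.span ℝ ((Λ n : Set H)), ‖f - interp (Λ n) f‖ ≤ ‖f - v‖ := by
    intro n v hv
    haveI : FiniteDimensional ℝ (Submodule.span ℝ ((Λ n : Set H))) :=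
      FiniteDimensional.span_of_finite ℝ (Λ n).finite_toSet
    rw [interp, ← Submodule.starProjection_apply, Submodule.starProjection_minimal]
    refine ciInf_le ?_ (⟨v, hv⟩ : ↥(Submodule.span ℝ ((Λ n : Set H))))
    refine ⟨0, ?_⟩
    rintro x ⟨w, rfl⟩
    positivity
  rw [Metric.tendsto_atTop]
  intro ε hε
  obtain ⟨v, hvS, hvd⟩ := Metric.mem_closure_iff.mp hfS ε hε
  obtain ⟨N, hN⟩ := (Submodule.mem_iSup_of_chain ⟨_, hmono⟩ v).mp hvS
  refine ⟨N, fun n hn => ?_⟩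
  have h1 : ‖f - interp (Λ n) f‖ ≤ ‖f - v‖ := key n v (hmono hn hN)
  rw [Real.dist_eq, sub_zero, abs_of_nonneg (norm_nonneg _)]
  calc ‖f - interp (Λ n) f‖ ≤ ‖f - v‖ := h1
    _ = dist f v := (dist_eq_norm _ _).symm
    _ < ε := hvd
end

section
/- Let H be a real Hilbert space, Γ ⊆ H, (Λ_n)_{n∈ℕ} a nested sequence of finite linearly independent subsets of Γ, and f an element of the closed linear span H_Γ of Γ. If ⟪I_{Λ_n}(f), γ⟫ → ⟪f, γ⟫ as n → ∞ for every γ ∈ Γ, then ‖f − I_{Λ_n}(f)‖ → 0 as n → ∞. -/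
open Filter
open scoped RealInnerProductSpace ENNReal Topology

/-- if `f` lies in the closed linear span of `Γ` and the interpolants converge
weakly on `Γ`, i.e. `⟪I_{Λ n}(f), γ⟫ → ⟪f, γ⟫` for all `γ ∈ Γ`, then they converge in norm:
`‖f - I_{Λ n}(f)‖ → 0`. -/
theorem stmt_10 {H : Type*} [NormedAddCommGroup H] [InnerProductSpace ℝ H] [CompleteSpace H]
    (Γ : Set H) (Λ : ℕ → Finset H)
    (hnested : ∀ n, Λ n ⊆ Λ (n + 1))
    (hsub : ∀ n, (Λ n : Set H) ⊆ Γ)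
    (hli : ∀ n, LinearIndependent (ι := (Λ n : Set H)) ℝ Subtype.val)
    (f : H) (hf : f ∈ closure (Submodule.span ℝ Γ : Set H))
    (hweak : ∀ γ ∈ Γ, Tendsto (fun n => ⟪interp (Λ n) f, γ⟫) atTop (𝓝 ⟪f, γ⟫)) :
    Tendsto (fun n => ‖f - interp (Λ n) f‖) atTop (𝓝 0) := by
  classical
  haveI hFD : ∀ n, FiniteDimensional ℝ (Submodule.span ℝ ((Λ n : Set H))) := fun n =>
    FiniteDimensional.span_of_finite ℝ (Λ n).finite_toSet
  have horth : ∀ n, ∀ w ∈ Submodule.span ℝ ((Λ n : Set H)),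
      ⟪f - interp (Λ n) f, w⟫ = 0 := by
    intro n w hw
    unfold interp; rw [← Submodule.starProjection_apply]
    exact Submodule.starProjection_inner_eq_zero f w hw
  have hmem : ∀ n, interp (Λ n) f ∈ Submodule.span ℝ ((Λ n : Set H)) := fun n =>
    ((Submodule.span ℝ ((Λ n : Set H))).orthogonalProjectionOnto f).2
  have hsq : ∀ n, ‖f - interp (Λ n) f‖ ^ 2 = ⟪f - interp (Λ n) f, f⟫ := by
    intro n
    have h0 := horth n _ (hmem n)
    have h1 : ⟪f - interp (Λ n) f, f⟫
        = ⟪f - interp (Λ n) f, f - interp (Λ n) f⟫ + ⟪f - interp (Λ n) f, interp (Λ n) f⟫ := by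
      rw [← inner_add_right]
      congr 1
      abel
    rw [h1, h0, add_zero, real_inner_self_eq_norm_sq]
  have hbound : ∀ n, ‖f - interp (Λ n) f‖ ≤ ‖f‖ := by
    intro n
    have h1 : ‖f - interp (Λ n) f‖ ^ 2 ≤ ‖f - interp (Λ n) f‖ * ‖f‖ := by
      rw [hsq n]; exact real_inner_le_norm _ _
    rcases eq_or_lt_of_le (norm_nonneg (f - interp (Λ n) f)) with h | h
    · rw [← h]; exact norm_nonneg f
    · nlinarith
  have hspan : ∀ g ∈ Submodule.span ℝ Γ,
      Tendsto (fun n => ⟪f - interp (Λ n) f, g⟫) atTop (𝓝 0) := by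
    intro g hg
    induction hg using Submodule.span_induction with
    | mem γ hγ =>
      have h := (tendsto_const_nhds (x := ⟪f, γ⟫)).sub (hweak γ hγ)
      simpa [inner_sub_left] using h
    | zero => simpa using tendsto_const_nhds
    | add x y hx hy ihx ihy => simpa [inner_add_right] using ihx.add ihy
    | smul a x hx ih => simpa [inner_smul_right] using ih.const_mul a
  have hmain : Tendsto (fun n => ⟪f - interp (Λ n) f, f⟫) atTop (𝓝 0) := by
    rw [Metric.tendsto_atTop]
    intro ε hε
    obtain ⟨g, hg, hgf⟩ : ∃ g ∈ Submodule.span ℝ Γ, ‖f - g‖ < ε / (2 * (‖f‖ + 1)) := by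
      obtain ⟨g, hg, hd⟩ := Metric.mem_closure_iff.mp hf (ε / (2 * (‖f‖ + 1))) (by positivity)
      exact ⟨g, hg, by rwa [dist_eq_norm] at hd⟩
    obtain ⟨N, hN⟩ := Metric.tendsto_atTop.mp (hspan g hg) (ε / 2) (by positivity)
    refine ⟨N, fun n hn => ?_⟩
    have h1 := hN n hn
    simp only [Real.dist_eq, sub_zero] at h1 ⊢
    have h2 : ⟪f - interp (Λ n) f, f⟫
        = ⟪f - interp (Λ n) f, g⟫ + ⟪f - interp (Λ n) f, f - g⟫ := by
      rw [← inner_add_right]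
      congr 1
      abel
    have h3 : |⟪f - interp (Λ n) f, f - g⟫| ≤ ‖f‖ * (ε / (2 * (‖f‖ + 1))) :=
      le_trans (abs_real_inner_le_norm _ _)
        (mul_le_mul (hbound n) hgf.le (norm_nonneg _) (norm_nonneg _))
    have h4 : ‖f‖ * (ε / (2 * (‖f‖ + 1))) < ε / 2 := by
      have hfn : (0:ℝ) ≤ ‖f‖ := norm_nonneg f
      have hpos : 0 < ε / (2 * (‖f‖ + 1)) := by positivity
      have heq2 : (‖f‖ + 1) * (ε / (2 * (‖f‖ + 1))) = ε / 2 := by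
        field_simp
      calc ‖f‖ * (ε / (2 * (‖f‖ + 1)))
          < (‖f‖ + 1) * (ε / (2 * (‖f‖ + 1))) := by
            exact mul_lt_mul_of_pos_right (by linarith) hpos
        _ = ε / 2 := heq2
    calc |⟪f - interp (Λ n) f, f⟫|
        ≤ |⟪f - interp (Λ n) f, g⟫| + |⟪f - interp (Λ n) f, f - g⟫| := by
          rw [h2]; exact abs_add_le _ _
      _ < ε / 2 + ε / 2 := by
          exact add_lt_add_of_lt_of_le h1 (le_trans h3 h4.le)
      _ = ε := by ring
  have heq : (fun n => ‖f - interp (Λ n) f‖)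
      = fun n => Real.sqrt ⟪f - interp (Λ n) f, f⟫ := by
    funext n
    rw [← hsq n, Real.sqrt_sq (norm_nonneg _)]
  rw [heq]
  have := (Real.continuous_sqrt.tendsto 0).comp hmain
  rw [Real.sqrt_zero] at this
  exact this
end
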